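/- Let X = {0,1}^{d−1} × {0} ⊂ ℝ^d be the vertex set of the unit hypercube and let x₀ = (1/2, …, 1/2, c) ∈ ℝ^d with c > √(d−1)/2. Then for any two distinct vertices y, z ∈ X, the triangle x₀ y z is acute: all three angles ∠y x₀ z, ∠x₀ y z, ∠x₀ z y are strictly less than π/2. -/

import Mathlib

open EuclideanGeometry InnerProductGeometry Finset

/-- The vertex set `{0,1}^(d-1) × {0}` of the `(d-1)`-dimensional unit hypercube
embedded in `ℝ^d` with last coordinate `0`. -/
def hypercube (d : ℕ) : Set (EuclideanSpace ℝ (Fin d)) :=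
  {v | ∀ i : Fin d, if (i : ℕ) = d - 1 then v i = 0 else v i = 0 ∨ v i = 1}

lemma angle_lt_of_inner_pos {V : Type*} [NormedAddCommGroup V] [InnerProductSpace ℝ V]
    {x y : V} (h : 0 < (inner ℝ x y : ℝ)) : InnerProductGeometry.angle x y < Real.pi / 2 := by
  have hx : x ≠ 0 := by rintro rfl; simp at h
  have hy : y ≠ 0 := by rintro rfl; simp at h
  rw [InnerProductGeometry.angle, Real.arccos_lt_pi_div_two]
  exact div_pos h (mul_pos (norm_pos_iff.2 hx) (norm_pos_iff.2 hy))

lemma euclid_angle_lt {d : ℕ} {a b c : EuclideanSpace ℝ (Fin d)}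
    (h : 0 < ∑ i, (a i - b i) * (c i - b i)) :
    EuclideanGeometry.angle a b c < Real.pi / 2 := by
  apply angle_lt_of_inner_pos
  rw [show a -ᵥ b = a - b from rfl, show c -ᵥ b = c - b from rfl]
  rw [PiLp.inner_apply]
  simpa [PiLp.sub_apply, mul_comm] using h

/-- base angle -/
lemma base_angle_lt (d : ℕ) (hd : 2 ≤ d) (c : ℝ)
    (hc : Real.sqrt ((d : ℝ) - 1) / 2 < c)
    (x₀ : EuclideanSpace ℝ (Fin d))
    (hx₀ : ∀ i : Fin d, x₀ i = if (i : ℕ) = d - 1 then c else 1 / 2)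
    {y z : EuclideanSpace ℝ (Fin d)} (hy : y ∈ hypercube d) (hz : z ∈ hypercube d)
    (hyz : y ≠ z) : EuclideanGeometry.angle x₀ y z < Real.pi / 2 := by
  apply euclid_angle_lt
  obtain ⟨j, hj⟩ : ∃ j, y j ≠ z j := by
    by_contra h; push_neg at h; exact hyz (PiLp.ext h)
  have hjL : (j : ℕ) ≠ d - 1 := by
    intro h
    have h1 := hy j; have h2 := hz j
    rw [if_pos h] at h1 h2
    exact hj (h1.trans h2.symm)
  apply Finset.sum_pos'
  · intro i _
    by_cases hi : (i : ℕ) = d - 1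
    · have h1 := hy i; have h2 := hz i
      rw [if_pos hi] at h1 h2
      simp [h1, h2]
    · have h1 := hy i; have h2 := hz i
      rw [if_neg hi] at h1 h2
      have hx := hx₀ i; rw [if_neg hi] at hx
      rcases h1 with h1 | h1 <;> rcases h2 with h2 | h2 <;>
        rw [hx, h1, h2] <;> norm_num
  · refine ⟨j, Finset.mem_univ j, ?_⟩
    have h1 := hy j; have h2 := hz j
    rw [if_neg hjL] at h1 h2
    have hx := hx₀ j; rw [if_neg hjL] at hx
    rcases h1 with h1 | h1 <;> rcases h2 with h2 | h2 <;>
      first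
      | (exact absurd (h1.trans h2.symm) hj)
      | (rw [hx, h1, h2]; norm_num)

lemma apex_angle_lt (d : ℕ) (hd : 2 ≤ d) (c : ℝ)
    (hc : Real.sqrt ((d : ℝ) - 1) / 2 < c)
    (x₀ : EuclideanSpace ℝ (Fin d))
    (hx₀ : ∀ i : Fin d, x₀ i = if (i : ℕ) = d - 1 then c else 1 / 2)
    {y z : EuclideanSpace ℝ (Fin d)} (hy : y ∈ hypercube d) (hz : z ∈ hypercube d) :
    EuclideanGeometry.angle y x₀ z < Real.pi / 2 := by
  apply euclid_angle_lt
  set f : Fin d → ℝ := fun i => (y i - x₀ i) * (z i - x₀ i) with hf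
  have hL : (0:ℕ) < d := by omega
  set L : Fin d := ⟨d - 1, by omega⟩ with hLdef
  have hsplit := Finset.add_sum_erase Finset.univ f (Finset.mem_univ L)
  have hd1 : (0:ℝ) ≤ (d:ℝ) - 1 := by
    have : (2:ℝ) ≤ (d:ℝ) := by exact_mod_cast hd
    linarith
  have hc2 : ((d:ℝ) - 1) / 4 < c ^ 2 := by
    have h0 : 0 ≤ Real.sqrt ((d:ℝ) - 1) / 2 := by positivity
    have := mul_self_lt_mul_self h0 hc
    have hs : Real.sqrt ((d:ℝ)-1) * Real.sqrt ((d:ℝ)-1) = (d:ℝ) - 1 :=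
      Real.mul_self_sqrt hd1
    nlinarith
  have hfL : f L = c ^ 2 := by
    have h1 := hy L; have h2 := hz L
    have hx := hx₀ L
    rw [if_pos rfl] at h1 h2 hx
    simp only [hf, h1, h2, hx]; ring
  have hcard : (Finset.univ.erase L).card = d - 1 := by
    rw [Finset.card_erase_of_mem (Finset.mem_univ L), Finset.card_univ, Fintype.card_fin]
  have hcast : ((d - 1 : ℕ) : ℝ) = (d:ℝ) - 1 := by
    have : 1 ≤ d := by omega
    push_cast [this]; ring
  have hbound : -(((d:ℝ)-1)/4) ≤ ∑ i ∈ Finset.univ.erase L, f i := by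
    have h := Finset.card_nsmul_le_sum (Finset.univ.erase L) f (-(1/4))
    rw [hcard, nsmul_eq_mul, hcast] at h
    refine le_trans (by linarith) (h ?_)
    intro i hi
    have hiL : (i : ℕ) ≠ d - 1 := by
      intro h
      exact (Finset.mem_erase.1 hi).1 (Fin.ext h)
    have h1 := hy i; have h2 := hz i
    have hx := hx₀ i
    rw [if_neg hiL] at h1 h2 hx
    rcases h1 with h1 | h1 <;> rcases h2 with h2 | h2 <;>
      simp only [hf, h1, h2, hx] <;> norm_num
  rw [← hsplit, hfL]
  nlinarith [hbound]

/-- Let `x₀ = (1/2, …, 1/2, c) ∈ ℝ^d` with `c > √(d-1)/2`.  For any two distinct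
vertices `y, z` of the hypercube `X = {0,1}^(d-1) × {0}`, the triangle `x₀ y z` is
acute: all three angles `∠y x₀ z`, `∠x₀ y z` and `∠x₀ z y` are strictly less
than `π/2`. -/
theorem apex_triangle_acute (d : ℕ) (hd : 2 ≤ d) (c : ℝ)
    (hc : Real.sqrt ((d : ℝ) - 1) / 2 < c)
    (x₀ : EuclideanSpace ℝ (Fin d))
    (hx₀ : ∀ i : Fin d, x₀ i = if (i : ℕ) = d - 1 then c else 1 / 2) :
    ∀ y ∈ hypercube d, ∀ z ∈ hypercube d, y ≠ z →
      EuclideanGeometry.angle y x₀ z < Real.pi / 2 ∧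
      EuclideanGeometry.angle x₀ y z < Real.pi / 2 ∧
      EuclideanGeometry.angle x₀ z y < Real.pi / 2 := by
  intro y hy z hz hyz
  exact ⟨apex_angle_lt d hd c hc x₀ hx₀ hy hz,
    base_angle_lt d hd c hc x₀ hx₀ hy hz hyz,
    base_angle_lt d hd c hc x₀ hx₀ hz hy hyz.symm⟩
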